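/- Let μ = (μ₁,…,μ_m) and λ = (λ₁,…,λ_n) be probability vectors, C ⊆ ℝ an interval, x₁,…,xₙ ∈ C, φ : C → ℝ convex, and ω₁, ω₂ two weight functions with respect to μ and λ. Then φ(∑_{j=1}^n λⱼxⱼ) ≤ ∑_{i=1}^m μᵢ A(φ; ∑_{j=1}^n ω₁(i,j)λⱼxⱼ, ∑_{j=1}^n ω₂(i,j)λⱼxⱼ) ≤ ∑_{j=1}^n λⱼφ(xⱼ), where A(f;a,b) = (1/(b−a))∫_a^b f(x) dx for a ≠ b and A(f;a,a) = f(a). -/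

import Mathlib

open Finset MeasureTheory

/-- The arithmetic (integral) mean `A(f;a,b)` of a function `f` over the interval
with endpoints `a` and `b`, with `A(f;a,a) = f a`. -/
noncomputable def intMean (f : ℝ → ℝ) (a b : ℝ) : ℝ :=
  if a = b then f a else (b - a)⁻¹ * ∫ x in a..b, f x

lemma intMean_comm (f : ℝ → ℝ) (a b : ℝ) : intMean f a b = intMean f b a := by
  unfold intMean
  rcases eq_or_ne a b with h | h
  · simp [h]
  · rw [if_neg h, if_neg (Ne.symm h), intervalIntegral.integral_symm a b]
    have : (a - b)⁻¹ = -(b - a)⁻¹ := by rw [show a - b = -(b - a) by ring, inv_neg]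
    rw [this]; ring

/-- A convex function on a compact interval is interval integrable. -/
lemma ConvexOn.intervalIntegrable_of_Icc {a b : ℝ} (hab : a < b) {φ : ℝ → ℝ}
    (hφ : ConvexOn ℝ (Set.Icc a b) φ) : IntervalIntegrable φ volume a b := by
  have ha : a ∈ Set.Icc a b := Set.left_mem_Icc.mpr hab.le
  have hb : b ∈ Set.Icc a b := Set.right_mem_Icc.mpr hab.le
  set M : ℝ := max (φ a) (φ b) with hM
  have hupper : ∀ y ∈ Set.Icc a b, φ y ≤ M := fun y hy =>
    hφ.le_on_segment ha hb (by rwa [segment_eq_Icc hab.le])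
  have hmid : (a + b) / 2 ∈ Set.Icc a b := ⟨by linarith, by linarith⟩
  have hlower : ∀ y ∈ Set.Icc a b, 2 * φ ((a + b) / 2) - M ≤ φ y := by
    intro y hy
    have hy' : a + b - y ∈ Set.Icc a b := ⟨by linarith [hy.2], by linarith [hy.1]⟩
    have h2 := hφ.2 hy hy' (by norm_num : (0:ℝ) ≤ 1/2) (by norm_num : (0:ℝ) ≤ 1/2)
      (by norm_num)
    have hmidpt : (1/2 : ℝ) • y + (1/2 : ℝ) • (a + b - y) = (a + b) / 2 := by
      simp [smul_eq_mul]; ring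
    rw [hmidpt] at h2
    have := hupper _ hy'
    simp only [smul_eq_mul] at h2
    linarith
  set K : ℝ := |M| + |2 * φ ((a + b) / 2) - M| with hK
  have hbound : ∀ y ∈ Set.Icc a b, ‖φ y‖ ≤ K := by
    intro y hy
    rw [Real.norm_eq_abs, abs_le]
    constructor
    · have := hlower y hy
      have h1 : -(|2 * φ ((a + b) / 2) - M|) ≤ 2 * φ ((a + b) / 2) - M := neg_abs_le _
      have h2 : (0:ℝ) ≤ |M| := abs_nonneg _
      simp only [hK]; linarith
    · have := hupper y hy
      have h1 : M ≤ |M| := le_abs_self _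
      have h2 : (0:ℝ) ≤ |2 * φ ((a + b) / 2) - M| := abs_nonneg _
      simp only [hK]; linarith
  have hcont : ContinuousOn φ (Set.Ioo a b) := by
    have := hφ.continuousOn_interior
    rwa [interior_Icc] at this
  have hint : IntegrableOn φ (Set.Ioo a b) volume := by
    refine ⟨hcont.aestronglyMeasurable measurableSet_Ioo, ?_⟩
    exact HasFiniteIntegral.of_bounded (C := K)
      (ae_restrict_of_forall_mem measurableSet_Ioo fun y hy => hbound y (Set.Ioo_subset_Icc_self hy))
  exact (intervalIntegrable_iff_integrableOn_Ioo_of_le hab.le).mpr hint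

/-- Hermite–Hadamard, right inequality (ordered version). -/
lemma hh_right {a b : ℝ} (hab : a < b) {φ : ℝ → ℝ} (hφ : ConvexOn ℝ (Set.Icc a b) φ) :
    ∫ x in a..b, φ x ≤ (b - a) * ((φ a + φ b) / 2) := by
  have hba : b - a ≠ 0 := sub_ne_zero.mpr hab.ne'
  set p : ℝ := (b * φ a - a * φ b) / (b - a) with hp
  set q : ℝ := (φ b - φ a) / (b - a) with hq
  have hchord : ∀ y ∈ Set.Icc a b, φ y ≤ p + q * y := by
    intro y hy
    have ht1 : (0:ℝ) ≤ (b - y) / (b - a) := by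
      apply div_nonneg <;> linarith [hy.2]
    have ht2 : (0:ℝ) ≤ (y - a) / (b - a) := by
      apply div_nonneg <;> linarith [hy.1]
    have htsum : (b - y) / (b - a) + (y - a) / (b - a) = 1 := by
      field_simp; ring
    have h2 := hφ.2 (Set.left_mem_Icc.mpr hab.le) (Set.right_mem_Icc.mpr hab.le) ht1 ht2 htsum
    simp only [smul_eq_mul] at h2
    have hcomb : (b - y) / (b - a) * a + (y - a) / (b - a) * b = y := by
      field_simp; ring
    rw [hcomb] at h2
    calc φ y ≤ (b - y) / (b - a) * φ a + (y - a) / (b - a) * φ b := h2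
      _ = p + q * y := by
          rw [hp, hq, div_mul_eq_mul_div, div_mul_eq_mul_div, ← add_div,
            div_mul_eq_mul_div, ← add_div, div_eq_div_iff hba hba]
          ring
  have hintφ : IntervalIntegrable φ volume a b := hφ.intervalIntegrable_of_Icc hab
  have hintq : IntervalIntegrable (fun y : ℝ => q * y) volume a b := by
    apply Continuous.intervalIntegrable; continuity
  have hintl : IntervalIntegrable (fun y => p + q * y) volume a b :=
    intervalIntegrable_const.add hintq
  have h := intervalIntegral.integral_mono_on hab.le hintφ hintl hchord
  have hcalc : ∫ y in a..b, (p + q * y) = (b - a) * ((φ a + φ b) / 2) := by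
    rw [intervalIntegral.integral_add intervalIntegrable_const hintq,
      intervalIntegral.integral_const, intervalIntegral.integral_const_mul, integral_id]
    simp only [smul_eq_mul, hp, hq]
    field_simp
    ring
  linarith [h, hcalc.le, hcalc.ge]

/-- Hermite–Hadamard, left inequality (ordered version). -/
lemma hh_left {a b : ℝ} (hab : a < b) {φ : ℝ → ℝ} (hφ : ConvexOn ℝ (Set.Icc a b) φ) :
    (b - a) * φ ((a + b) / 2) ≤ ∫ x in a..b, φ x := by
  have hintφ : IntervalIntegrable φ volume a b := hφ.intervalIntegrable_of_Icc hab
  have hintr : IntervalIntegrable (fun y => φ (a + b - y)) volume a b := by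
    have h := hintφ.comp_sub_left (a + b)
    norm_num at h
    exact h.symm
  have hkey : ∀ y ∈ Set.Icc a b, φ ((a + b) / 2) ≤ (φ y + φ (a + b - y)) / 2 := by
    intro y hy
    have hy' : a + b - y ∈ Set.Icc a b := ⟨by linarith [hy.2], by linarith [hy.1]⟩
    have h2 := hφ.2 hy hy' (by norm_num : (0:ℝ) ≤ 1/2) (by norm_num : (0:ℝ) ≤ 1/2)
      (by norm_num)
    have hmidpt : (1/2 : ℝ) • y + (1/2 : ℝ) • (a + b - y) = (a + b) / 2 := by
      simp [smul_eq_mul]; ring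
    rw [hmidpt] at h2
    simp only [smul_eq_mul] at h2
    linarith
  have h := intervalIntegral.integral_mono_on hab.le intervalIntegrable_const
    ((hintφ.add hintr).div_const 2) hkey
  rw [intervalIntegral.integral_const, smul_eq_mul] at h
  have hrefl : (∫ y in a..b, φ (a + b - y)) = ∫ y in a..b, φ y := by
    rw [intervalIntegral.integral_comp_sub_left φ (a + b)]
    norm_num
  have hsplit : (∫ y in a..b, (φ y + φ (a + b - y)) / 2)
      = ((∫ y in a..b, φ y) + ∫ y in a..b, φ (a + b - y)) / 2 := by
    rw [intervalIntegral.integral_div, intervalIntegral.integral_add hintφ hintr]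
  rw [hsplit, hrefl] at h
  linarith

/-- Hermite–Hadamard left, via `intMean`, on a convex set. -/
lemma intMean_ge {C : Set ℝ} (hC : Convex ℝ C) {φ : ℝ → ℝ} (hφ : ConvexOn ℝ C φ)
    {a b : ℝ} (ha : a ∈ C) (hb : b ∈ C) : φ ((a + b) / 2) ≤ intMean φ a b := by
  have main : ∀ a b : ℝ, a ∈ C → b ∈ C → a ≤ b → φ ((a + b) / 2) ≤ intMean φ a b := by
    intro a b ha hb hab
    rcases eq_or_lt_of_le hab with rfl | hab
    · simp [intMean]
    · have hsub : Set.Icc a b ⊆ C := hC.ordConnected.out ha hb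
      have hφ' : ConvexOn ℝ (Set.Icc a b) φ := hφ.subset hsub (convex_Icc a b)
      rw [intMean, if_neg hab.ne]
      rw [inv_mul_eq_div, le_div_iff₀ (by linarith : (0:ℝ) < b - a)]
      have := hh_left hab hφ'
      linarith
  rcases le_total a b with h | h
  · exact main a b ha hb h
  · rw [intMean_comm]
    have : (a + b) / 2 = (b + a) / 2 := by ring
    rw [this]
    exact main b a hb ha h

/-- Hermite–Hadamard right, via `intMean`, on a convex set. -/
lemma intMean_le {C : Set ℝ} (hC : Convex ℝ C) {φ : ℝ → ℝ} (hφ : ConvexOn ℝ C φ)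
    {a b : ℝ} (ha : a ∈ C) (hb : b ∈ C) : intMean φ a b ≤ (φ a + φ b) / 2 := by
  have main : ∀ a b : ℝ, a ∈ C → b ∈ C → a ≤ b → intMean φ a b ≤ (φ a + φ b) / 2 := by
    intro a b ha hb hab
    rcases eq_or_lt_of_le hab with rfl | hab
    · simp [intMean]
    · have hsub : Set.Icc a b ⊆ C := hC.ordConnected.out ha hb
      have hφ' : ConvexOn ℝ (Set.Icc a b) φ := hφ.subset hsub (convex_Icc a b)
      rw [intMean, if_neg hab.ne]
      rw [inv_mul_eq_div, div_le_iff₀ (by linarith : (0:ℝ) < b - a)]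
      have := hh_right hab hφ'
      linarith
  rcases le_total a b with h | h
  · exact main a b ha hb h
  · rw [intMean_comm]
    have : (φ a + φ b) / 2 = (φ b + φ a) / 2 := by ring
    rw [this]
    exact main b a hb ha h

/-- Hermite–Hadamard type refinement of discrete Jensen's inequality via two
weight functions, on an interval of `ℝ`. -/
theorem jensen_refinement_two_weights_intMean
    {m n : ℕ} (μ : Fin m → ℝ) (lam : Fin n → ℝ)
    (hμ0 : ∀ i, 0 ≤ μ i) (hμ1 : ∑ i, μ i = 1)
    (hlam0 : ∀ j, 0 ≤ lam j) (hlam1 : ∑ j, lam j = 1)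
    (C : Set ℝ) (hC : Convex ℝ C) (x : Fin n → ℝ) (hx : ∀ j, x j ∈ C)
    (φ : ℝ → ℝ) (hφ : ConvexOn ℝ C φ)
    (ω₁ ω₂ : Fin m → Fin n → ℝ)
    (hω₁0 : ∀ i j, 0 ≤ ω₁ i j) (hω₁μ : ∀ j, ∑ i, ω₁ i j * μ i = 1)
    (hω₁lam : ∀ i, ∑ j, ω₁ i j * lam j = 1)
    (hω₂0 : ∀ i j, 0 ≤ ω₂ i j) (hω₂μ : ∀ j, ∑ i, ω₂ i j * μ i = 1)
    (hω₂lam : ∀ i, ∑ j, ω₂ i j * lam j = 1) :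
    φ (∑ j, lam j * x j) ≤
        ∑ i, μ i * intMean φ (∑ j, ω₁ i j * lam j * x j) (∑ j, ω₂ i j * lam j * x j) ∧
      ∑ i, μ i * intMean φ (∑ j, ω₁ i j * lam j * x j) (∑ j, ω₂ i j * lam j * x j) ≤
        ∑ j, lam j * φ (x j) := by
  set A : Fin m → ℝ := fun i => ∑ j, ω₁ i j * lam j * x j with hAdef
  set B : Fin m → ℝ := fun i => ∑ j, ω₂ i j * lam j * x j with hBdef
  -- membership of the convex combinations in C
  have hmemgen : ∀ (ω : Fin m → Fin n → ℝ), (∀ i j, 0 ≤ ω i j) →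
      (∀ i, ∑ j, ω i j * lam j = 1) → ∀ i, (∑ j, ω i j * lam j * x j) ∈ C := by
    intro ω hω0 hωlam i
    have := hC.sum_mem (t := Finset.univ) (w := fun j => ω i j * lam j) (z := x)
      (fun j _ => mul_nonneg (hω0 i j) (hlam0 j)) (hωlam i) (fun j _ => hx j)
    simpa [smul_eq_mul] using this
  have hA : ∀ i, A i ∈ C := hmemgen ω₁ hω₁0 hω₁lam
  have hB : ∀ i, B i ∈ C := hmemgen ω₂ hω₂0 hω₂lam
  -- swap-sum identity
  have key : ∀ (ω : Fin m → Fin n → ℝ), (∀ j, ∑ i, ω i j * μ i = 1) →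
      ∀ (y : Fin n → ℝ), ∑ i, μ i * (∑ j, ω i j * lam j * y j) = ∑ j, lam j * y j := by
    intro ω hωμ y
    calc ∑ i, μ i * ∑ j, ω i j * lam j * y j
        = ∑ i, ∑ j, μ i * (ω i j * lam j * y j) := by
          exact Finset.sum_congr rfl fun i _ => Finset.mul_sum _ _ _
      _ = ∑ j, ∑ i, μ i * (ω i j * lam j * y j) := Finset.sum_comm
      _ = ∑ j, (∑ i, ω i j * μ i) * (lam j * y j) := by
          refine Finset.sum_congr rfl fun j _ => ?_
          rw [Finset.sum_mul]
          exact Finset.sum_congr rfl fun i _ => by ring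
      _ = ∑ j, lam j * y j := by
          refine Finset.sum_congr rfl fun j _ => ?_
          rw [hωμ j, one_mul]
  have h1 : ∑ i, μ i * A i = ∑ j, lam j * x j := key ω₁ hω₁μ x
  have h2 : ∑ i, μ i * B i = ∑ j, lam j * x j := key ω₂ hω₂μ x
  have hmidmem : ∀ i, (A i + B i) / 2 ∈ C := by
    intro i
    have := hC (hA i) (hB i) (by norm_num : (0:ℝ) ≤ 1/2) (by norm_num : (0:ℝ) ≤ 1/2)
      (by norm_num)
    have heq : (1/2 : ℝ) • A i + (1/2 : ℝ) • B i = (A i + B i) / 2 := by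
      simp [smul_eq_mul]; ring
    rwa [heq] at this
  constructor
  · -- left inequality
    have hrw : (∑ j, lam j * x j) = ∑ i, μ i • ((A i + B i) / 2) := by
      simp only [smul_eq_mul]
      rw [show (∑ i, μ i * ((A i + B i) / 2)) = ((∑ i, μ i * A i) + ∑ i, μ i * B i) / 2 by
        rw [← Finset.sum_add_distrib]
        rw [Finset.sum_div]
        exact Finset.sum_congr rfl fun i _ => by ring]
      rw [h1, h2]; ring
    calc φ (∑ j, lam j * x j) = φ (∑ i, μ i • ((A i + B i) / 2)) := by rw [hrw]
      _ ≤ ∑ i, μ i • φ ((A i + B i) / 2) :=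
          hφ.map_sum_le (fun i _ => hμ0 i) hμ1 (fun i _ => hmidmem i)
      _ ≤ ∑ i, μ i * intMean φ (A i) (B i) := by
          simp only [smul_eq_mul]
          exact Finset.sum_le_sum fun i _ =>
            mul_le_mul_of_nonneg_left (intMean_ge hC hφ (hA i) (hB i)) (hμ0 i)
  · -- right inequality
    have hjensen : ∀ (ω : Fin m → Fin n → ℝ), (∀ i j, 0 ≤ ω i j) →
        (∀ i, ∑ j, ω i j * lam j = 1) → ∀ i,
        φ (∑ j, ω i j * lam j * x j) ≤ ∑ j, ω i j * lam j * φ (x j) := by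
      intro ω hω0 hωlam i
      have := hφ.map_sum_le (t := Finset.univ) (w := fun j => ω i j * lam j) (p := x)
        (fun j _ => mul_nonneg (hω0 i j) (hlam0 j)) (hωlam i) (fun j _ => hx j)
      simpa [smul_eq_mul] using this
    calc ∑ i, μ i * intMean φ (A i) (B i)
        ≤ ∑ i, μ i * ((φ (A i) + φ (B i)) / 2) :=
          Finset.sum_le_sum fun i _ =>
            mul_le_mul_of_nonneg_left (intMean_le hC hφ (hA i) (hB i)) (hμ0 i)
      _ ≤ ∑ i, μ i * (((∑ j, ω₁ i j * lam j * φ (x j)) + ∑ j, ω₂ i j * lam j * φ (x j)) / 2) := by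
          refine Finset.sum_le_sum fun i _ => mul_le_mul_of_nonneg_left ?_ (hμ0 i)
          have hj1 := hjensen ω₁ hω₁0 hω₁lam i
          have hj2 := hjensen ω₂ hω₂0 hω₂lam i
          have : φ (A i) ≤ ∑ j, ω₁ i j * lam j * φ (x j) := hj1
          have : φ (B i) ≤ ∑ j, ω₂ i j * lam j * φ (x j) := hj2
          linarith [hj1, hj2]
      _ = ∑ j, lam j * φ (x j) := by
          rw [show (∑ i, μ i * (((∑ j, ω₁ i j * lam j * φ (x j))
                + ∑ j, ω₂ i j * lam j * φ (x j)) / 2))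
              = ((∑ i, μ i * ∑ j, ω₁ i j * lam j * φ (x j))
                + ∑ i, μ i * ∑ j, ω₂ i j * lam j * φ (x j)) / 2 by
            rw [← Finset.sum_add_distrib, Finset.sum_div]
            exact Finset.sum_congr rfl fun i _ => by ring]
          rw [key ω₁ hω₁μ (fun j => φ (x j)), key ω₂ hω₂μ (fun j => φ (x j))]
          ring
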